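/- Let H be a complex Hilbert space and let N_1, …, N_s be closed subspaces of H. The algebraic sum N_1 + ⋯ + N_s is closed if and only if 0 is not a cluster point (accumulation point) of the spectrum of the positive operator P_{N_1} + ⋯ + P_{N_s}. In that case, the range of P_{N_1} + ⋯ + P_{N_s} equals N_1 + ⋯ + N_s. -/

import Mathlib

set_option linter.unusedVariables false
set_option maxHeartbeats 1000000

private lemma aux_sq_le {a b : ℝ} (ha : 0 ≤ a) (hb : 0 ≤ b) (h : a ^ 2 ≤ b ^ 2) : a ≤ b := by
  nlinarith
private lemma aux1 {X A Cr sr TX : ℝ} (hX : 0 < X) (hC : 0 < Cr) (hA0 : 0 ≤ A) (hs : 0 ≤ sr)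
    (hTX : 0 ≤ TX) (h1 : X ^ 2 ≤ Cr * X * A) (h2 : A ^ 2 ≤ sr * (TX * X)) :
    X ≤ (Cr ^ 2 * sr + 1) * TX := by
  have hXA : X ≤ Cr * A := by
    have h3 : X * X ≤ (Cr * A) * X := by nlinarith
    exact le_of_mul_le_mul_right h3 hX
  have h4 : X * X ≤ (Cr ^ 2 * sr * TX) * X := by nlinarith
  have h5 : X ≤ Cr ^ 2 * sr * TX := le_of_mul_le_mul_right h4 hX
  nlinarith
private lemma aux2 {m u w c1 c2 DX X : ℝ} (hm : 0 ≤ m) (hu : 0 ≤ u) (hw : 0 ≤ w)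
    (hc1 : 0 ≤ c1) (hc2 : 0 ≤ c2) (h1 : m * u ≤ c1) (h2 : m * w ≤ c2)
    (hD : DX ^ 2 = c1 ^ 2 + c2 ^ 2) (hX : X ^ 2 = u ^ 2 + w ^ 2) (hDX : 0 ≤ DX) (hX0 : 0 ≤ X) :
    m * X ≤ DX := by
  refine aux_sq_le (by positivity) hDX ?_
  have h3 : (m * u) * (m * u) ≤ c1 * c1 := mul_self_le_mul_self (by positivity) h1
  have h4 : (m * w) * (m * w) ≤ c2 * c2 := mul_self_le_mul_self (by positivity) h2
  calc (m * X) ^ 2 = m ^ 2 * X ^ 2 := by ring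
    _ = m ^ 2 * u ^ 2 + m ^ 2 * w ^ 2 := by rw [hX]; ring
    _ ≤ c1 ^ 2 + c2 ^ 2 := by nlinarith [h3, h4]
    _ = DX ^ 2 := hD.symm

theorem gap_iff_not_accPt (Sp : Set ℂ) :
    (∃ ε > 0, ∀ z ∈ Sp, z ≠ 0 → ε ≤ ‖z‖) ↔ ¬ AccPt (0 : ℂ) (Filter.principal Sp) := by
  rw [accPt_iff_nhds]
  push_neg
  constructor
  · rintro ⟨ε, hε, hgap⟩
    refine ⟨Metric.ball 0 ε, Metric.ball_mem_nhds 0 hε, fun y hy => ?_⟩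
    by_contra hy0
    have h1 := hgap y hy.2 hy0
    have h2 := hy.1
    rw [Metric.mem_ball, dist_zero_right] at h2
    linarith
  · rintro ⟨U, hU, hU0⟩
    obtain ⟨ε, hε, hball⟩ := Metric.mem_nhds_iff.mp hU
    refine ⟨ε, hε, fun z hz hz0 => ?_⟩
    by_contra hlt
    push_neg at hlt
    exact hz0 (hU0 z ⟨hball (by rwa [Metric.mem_ball, dist_zero_right]), hz⟩)

/-- The orthogonal projection onto a subspace `K` of a complex inner product space,
as a bounded operator on the whole space (junk value `0` if `K` does not admit an
orthogonal projection; for a closed subspace of a Hilbert space it is the genuine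
orthogonal projection). -/
noncomputable def proj {H : Type*} [NormedAddCommGroup H] [InnerProductSpace ℂ H]
    (K : Submodule ℂ H) : H →L[ℂ] H :=
  letI := Classical.propDecidable (Submodule.HasOrthogonalProjection K)
  if h : Submodule.HasOrthogonalProjection K then
    haveI := h
    K.subtypeL.comp (Submodule.orthogonalProjectionOnto K)
  else 0



section helpers
set_option linter.unusedSectionVars false
variable {H : Type*} [NormedAddCommGroup H] [InnerProductSpace ℂ H] [CompleteSpace H]

open scoped InnerProductSpace ComplexConjugate
open Complex Submodule

theorem proj_eq (K : Submodule ℂ H) [HasOrthogonalProjection K] :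
    proj K = K.subtypeL.comp (orthogonalProjection K) := by
  rw [proj, dif_pos ‹_›]

theorem proj_apply (K : Submodule ℂ H) [HasOrthogonalProjection K] (x : H) :
    proj K x = orthogonalProjection K x := by rw [proj_eq]; rfl

theorem proj_mem (K : Submodule ℂ H) [HasOrthogonalProjection K] (x : H) :
    proj K x ∈ K := by rw [proj_apply]; exact (orthogonalProjection K x).2

theorem proj_eq_zero_iff (K : Submodule ℂ H) [HasOrthogonalProjection K] (x : H) :
    proj K x = 0 ↔ x ∈ Kᗮ := by
  rw [proj_apply, ← orthogonalProjection_eq_zero_iff (K := K) (v := x)]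
  exact_mod_cast Submodule.coe_eq_zero

theorem proj_inner (K : Submodule ℂ H) [HasOrthogonalProjection K] (x : H) :
    ⟪proj K x, x⟫_ℂ = (‖proj K x‖ : ℂ) ^ 2 := by
  have horth : ⟪proj K x, x - proj K x⟫_ℂ = 0 := by
    rw [proj_apply]
    exact (sub_starProjection_mem_orthogonal (K := K) x) _
      (by rw [← proj_apply]; exact proj_mem K x)
  have h2 : ⟪proj K x, x⟫_ℂ = ⟪proj K x, proj K x⟫_ℂ := by
    have h3 := inner_sub_right (𝕜 := ℂ) (proj K x) x (proj K x)
    rw [horth] at h3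
    exact sub_eq_zero.mp h3.symm
  rw [h2]
  exact inner_self_eq_norm_sq_to_K _

theorem proj_isPositive (K : Submodule ℂ H) [CompleteSpace K] :
    (proj K).IsPositive := by
  constructor
  · rw [proj_eq]; exact (isSelfAdjoint_starProjection K).isSymmetric
  · intro x
    rw [ContinuousLinearMap.reApplyInnerSelf_apply, proj_inner]
    exact_mod_cast sq_nonneg ‖proj K x‖

theorem surj_of_bddBelow {D : H →L[ℂ] H} (hD : IsSelfAdjoint D) {m : ℝ} (hm : 0 < m)
    (hbd : ∀ x, m * ‖x‖ ≤ ‖D x‖) : Function.Surjective D := by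
  have hanti : AntilipschitzWith ⟨m⁻¹, by positivity⟩ D :=
    ContinuousLinearMap.antilipschitz_of_bound D fun x => by
      have h1 := hbd x
      have h2 : m⁻¹ * (m * ‖x‖) ≤ m⁻¹ * ‖D x‖ :=
        mul_le_mul_of_nonneg_left h1 (by positivity)
      rw [← mul_assoc, inv_mul_cancel₀ hm.ne', one_mul] at h2
      exact_mod_cast h2
  have hclosed : IsClosed (Set.range D) := hanti.isClosed_range D.uniformContinuous
  have hrange_closed : IsClosed ((LinearMap.range (D : H →ₗ[ℂ] H) : Submodule ℂ H) : Set H) := by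
    have : ((LinearMap.range (D : H →ₗ[ℂ] H) : Submodule ℂ H) : Set H) = Set.range D := by
      ext y; simp [LinearMap.mem_range, Set.mem_range]
    rw [this]; exact hclosed
  haveI : CompleteSpace (LinearMap.range (D : H →ₗ[ℂ] H)) := hrange_closed.completeSpace_coe
  have horth : (LinearMap.range (D : H →ₗ[ℂ] H))ᗮ = ⊥ := by
    rw [Submodule.eq_bot_iff]
    intro z hz
    have hDz : D z = 0 := by
      have h1 : ∀ x : H, ⟪x, D z⟫_ℂ = 0 := fun x => by
        have hsym := hD.isSymmetric x z
        simp only [ContinuousLinearMap.coe_coe] at hsym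
        rw [← hsym]
        exact (Submodule.mem_orthogonal _ z).mp hz (D x) ⟨x, rfl⟩
      have := h1 (D z); rwa [inner_self_eq_zero] at this
    have h2 := hbd z
    rw [hDz, norm_zero] at h2
    have : ‖z‖ = 0 := le_antisymm (by nlinarith [norm_nonneg z]) (norm_nonneg z)
    exact norm_eq_zero.mp this
  have htop : LinearMap.range (D : H →ₗ[ℂ] H) = ⊤ := Submodule.orthogonal_eq_bot_iff.mp horth
  exact LinearMap.range_eq_top.mp htop


variable {s : ℕ} (N : Fin s → Submodule ℂ H) (hN : ∀ i, IsClosed ((N i : Set H)))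
include hN


theorem T_pos : (∑ i, proj (N i)).IsPositive := by
  refine Finset.sum_induction _ _ (fun a b ha hb => ha.add hb)
    ContinuousLinearMap.isPositive_zero (fun i _ => ?_)
  haveI := (hN i).completeSpace_coe
  exact proj_isPositive (N i)

theorem T_sa : IsSelfAdjoint (∑ i, proj (N i)) :=
  (T_pos N hN).isSelfAdjoint

theorem T_inner_re (x : H) :
    RCLike.re ⟪(∑ i, proj (N i)) x, x⟫_ℂ = ∑ i, ‖proj (N i) x‖ ^ 2 := by
  rw [ContinuousLinearMap.sum_apply, sum_inner]
  rw [map_sum]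
  refine Finset.sum_congr rfl fun i _ => ?_
  haveI := (hN i).completeSpace_coe
  rw [proj_inner]
  exact_mod_cast rfl

theorem T_ker (x : H) : (∑ i, proj (N i)) x = 0 ↔ x ∈ (⨆ i, N i)ᗮ := by
  rw [← Submodule.iInf_orthogonal, Submodule.mem_iInf]
  constructor
  · intro h i
    haveI := (hN i).completeSpace_coe
    rw [← proj_eq_zero_iff (N i) x]
    have h0 : ∑ i, ‖proj (N i) x‖ ^ 2 = 0 := by
      rw [← T_inner_re N hN, h, inner_zero_left, map_zero]
    have := (Finset.sum_eq_zero_iff_of_nonneg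
      (fun i _ => sq_nonneg ‖proj (N i) x‖)).mp h0 i (Finset.mem_univ i)
    simpa using this
  · intro h
    rw [ContinuousLinearMap.sum_apply]
    refine Finset.sum_eq_zero fun i _ => ?_
    haveI := (hN i).completeSpace_coe
    exact (proj_eq_zero_iff (N i) x).mpr (h i)

theorem T_range_le : LinearMap.range ((∑ i, proj (N i) : H →L[ℂ] H) : H →ₗ[ℂ] H) ≤ ⨆ i, N i := by
  rintro - ⟨x, rfl⟩
  rw [ContinuousLinearMap.coe_coe, ContinuousLinearMap.sum_apply]
  refine Submodule.sum_mem _ fun i _ => ?_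
  haveI := (hN i).completeSpace_coe
  exact le_iSup N i (proj_mem (N i) x)

theorem T_orth_range :
    (LinearMap.range ((∑ i, proj (N i) : H →L[ℂ] H) : H →ₗ[ℂ] H))ᗮ = (⨆ i, N i)ᗮ := by
  ext z
  rw [Submodule.mem_orthogonal, ← T_ker N hN]
  constructor
  · intro h
    have h1 : ∀ x : H, ⟪x, (∑ i, proj (N i)) z⟫_ℂ = 0 := fun x => by
      have hsym := (T_sa N hN).isSymmetric x z
      simp only [ContinuousLinearMap.coe_coe] at hsym
      rw [← hsym]
      exact h _ ⟨x, rfl⟩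
    have := h1 ((∑ i, proj (N i)) z)
    rwa [inner_self_eq_zero] at this
  · rintro h - ⟨x, rfl⟩
    have hsym := (T_sa N hN).isSymmetric x z
    simp only [ContinuousLinearMap.coe_coe] at hsym
    rw [ContinuousLinearMap.coe_coe, hsym, h, inner_zero_right]

theorem T_closure_range :
    (LinearMap.range ((∑ i, proj (N i) : H →L[ℂ] H) : H →ₗ[ℂ] H)).topologicalClosure
      = (⨆ i, N i).topologicalClosure := by
  rw [← Submodule.orthogonal_orthogonal_eq_closure, ← Submodule.orthogonal_orthogonal_eq_closure,
    T_orth_range N hN]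

theorem L1 (hgap : ∃ ε > 0, ∀ z ∈ spectrum ℂ (∑ i, proj (N i)), z ≠ 0 → ε ≤ ‖z‖) :
    LinearMap.range ((∑ i, proj (N i) : H →L[ℂ] H) : H →ₗ[ℂ] H) = ⨆ i, N i ∧
      IsClosed ((⨆ i, N i : Submodule ℂ H) : Set H) := by
  obtain ⟨ε, hε, hgap⟩ := hgap
  set T := ∑ i, proj (N i) with hTdef
  have hsa : IsSelfAdjoint T := T_sa N hN
  have hpos : T.IsPositive := T_pos N hN
  have hσ : ∀ t ∈ spectrum ℝ T, t = 0 ∨ ε ≤ t := by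
    intro t ht
    rcases eq_or_ne t 0 with h0 | h0
    · exact Or.inl h0
    · refine Or.inr ?_
      have hmem : (t : ℂ) ∈ spectrum ℂ T := by
        rw [← hsa.spectrumRestricts.algebraMap_image]
        exact ⟨t, ht, rfl⟩
      have hnn : 0 ≤ t :=
        spectrum_nonneg_of_nonneg ((ContinuousLinearMap.nonneg_iff_isPositive T).mpr hpos) ht
      have := hgap _ hmem (by exact_mod_cast h0)
      rwa [Complex.norm_real, Real.norm_eq_abs, _root_.abs_of_nonneg hnn] at this
  set hfun : ℝ → ℝ := fun t => (max t (ε/2))⁻¹ with hfun_def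
  have hfun_cont : Continuous hfun :=
    (continuous_id.max continuous_const).inv₀ fun t =>
      ne_of_gt (lt_of_lt_of_le (by positivity) (le_max_right _ _))
  set Q : H →L[ℂ] H := cfc (fun t : ℝ => t * hfun t) T with hQdef
  have hQ1 : Q = T * cfc hfun T := by
    rw [hQdef, cfc_mul (fun t : ℝ => t) hfun T (Continuous.continuousOn (by continuity))
      hfun_cont.continuousOn, cfc_id' ℝ T hsa]
  have hQT : Q * T = T := by
    have h1 := cfc_mul (fun t : ℝ => t * hfun t) (fun t : ℝ => t) T
      (Continuous.continuousOn (by continuity)) (Continuous.continuousOn (by continuity))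
    rw [cfc_id' ℝ T hsa] at h1
    rw [← h1]
    have h2 : (spectrum ℝ T).EqOn (fun t : ℝ => (t * hfun t) * t) (fun t : ℝ => t) := by
      intro t ht
      rcases hσ t ht with h0 | h0
      · simp [h0]
      · have ht0 : t ≠ 0 := (show (0:ℝ) < t by linarith).ne'
        have hmax : max t (ε/2) = t := max_eq_left (by linarith)
        simp only [hfun_def, hmax]
        field_simp
      
    rw [cfc_congr h2, cfc_id' ℝ T hsa]
  have hfix : ∀ y, Q (T y) = T y := fun y => by
    conv_rhs => rw [← hQT]
    rw [ContinuousLinearMap.mul_apply]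
  have hback : ∀ x : H, Q x = x → x ∈ LinearMap.range (T : H →ₗ[ℂ] H) := by
    intro x hx
    refine ⟨cfc hfun T x, ?_⟩
    conv_rhs => rw [← hx, hQ1, ContinuousLinearMap.mul_apply]
    rfl
  have hclosed_range : IsClosed ((LinearMap.range (T : H →ₗ[ℂ] H) : Submodule ℂ H) : Set H) := by
    refine isClosed_of_closure_subset fun x hx => ?_
    have hsub : closure ((LinearMap.range (T : H →ₗ[ℂ] H) : Submodule ℂ H) : Set H) ⊆ {x : H | Q x = x} :=
      closure_minimal (by rintro - ⟨y, rfl⟩; exact hfix y)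
        (isClosed_eq Q.continuous continuous_id)
    exact hback x (hsub hx)
  have heq : (LinearMap.range (T : H →ₗ[ℂ] H)).topologicalClosure = LinearMap.range (T : H →ₗ[ℂ] H) := by
    refine le_antisymm (fun x hx => ?_) (Submodule.le_topologicalClosure _)
    rwa [← SetLike.mem_coe, Submodule.topologicalClosure_coe,
      hclosed_range.closure_eq] at hx
  have h2 : (LinearMap.range (T : H →ₗ[ℂ] H) : Submodule ℂ H) = (⨆ i, N i).topologicalClosure :=
    heq.symm.trans (T_closure_range N hN)
  have h3 : LinearMap.range (T : H →ₗ[ℂ] H) = ⨆ i, N i :=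
    le_antisymm (T_range_le N hN) (h2 ▸ Submodule.le_topologicalClosure _)
  exact ⟨h3, h3 ▸ hclosed_range⟩

theorem L2 (hM : IsClosed ((⨆ i, N i : Submodule ℂ H) : Set H)) :
    ∃ ε > 0, ∀ z ∈ spectrum ℂ (∑ i, proj (N i)), z ≠ 0 → ε ≤ ‖z‖ := by
  set T := ∑ i, proj (N i) with hTdef
  set M := ⨆ i, N i with hMdef
  haveI : CompleteSpace M := hM.completeSpace_coe
  haveI : ∀ i, CompleteSpace (N i) := fun i => (hN i).completeSpace_coe
  -- the sum map and the open mapping bound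
  set S0 : (∀ i, N i) →L[ℂ] H := ∑ i, (N i).subtypeL.comp (ContinuousLinearMap.proj i) with hS0def
  have hS0 : ∀ v : (∀ i, N i), S0 v = ∑ i, ((v i : H)) := fun v => by
    simp [hS0def, ContinuousLinearMap.sum_apply]
  have hmemS : ∀ v : (∀ i, N i), S0 v ∈ M := fun v => by
    rw [hS0]; exact Submodule.sum_mem _ fun i _ => le_iSup N i (v i).2
  set S : (∀ i, N i) →L[ℂ] M := S0.codRestrict M hmemS with hSdef
  have hsurj : Function.Surjective S := by
    rintro ⟨x, hx⟩
    have hx' : x ∈ ⨆ i ∈ Finset.univ, N i := by simpa using hx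
    obtain ⟨μ, hμ⟩ := (Submodule.mem_iSup_finset_iff_exists_sum N x).mp hx'
    exact ⟨μ, Subtype.ext (by rw [hSdef, ContinuousLinearMap.coe_codRestrict_apply, hS0]; exact hμ)⟩
  obtain ⟨C, hC, hCle⟩ := S.exists_preimage_norm_le hsurj
  set c := C ^ 2 * (s : ℝ) + 1 with hcdef
  have hc : 0 < c := by positivity
  -- T is bounded below on M
  have hbd : ∀ x ∈ M, ‖x‖ ≤ c * ‖T x‖ := by
    intro x hx
    rcases eq_or_ne x 0 with rfl | hx0
    · simp [norm_nonneg, mul_nonneg hc.le (norm_nonneg _)]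
    obtain ⟨v, hv, hvle⟩ := hCle ⟨x, hx⟩
    have hvnorm : ∀ i, ‖(v i : H)‖ ≤ C * ‖x‖ := fun i =>
      le_trans (norm_le_pi_norm v i) (by simpa using hvle)
    have hsum : x = ∑ i, ((v i : H)) := by
      have h := congrArg Subtype.val hv
      rw [hSdef, ContinuousLinearMap.coe_codRestrict_apply, hS0] at h
      exact h.symm
    set A := ∑ i, ‖proj (N i) x‖ with hAdef
    have hA0 : 0 ≤ A := Finset.sum_nonneg fun i _ => norm_nonneg _
    have h1 : ‖x‖ ^ 2 ≤ C * ‖x‖ * A := by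
      have step : ∀ i, RCLike.re ⟪(v i : H), x⟫_ℂ ≤ ‖(v i : H)‖ * ‖proj (N i) x‖ := by
        intro i
        haveI := (hN i).completeSpace_coe
        have hperp : ⟪(v i : H), x - proj (N i) x⟫_ℂ = 0 := by
          have hmem : x - proj (N i) x ∈ (N i)ᗮ := by
            rw [proj_apply]
            exact sub_starProjection_mem_orthogonal x
          exact hmem (v i : H) (v i).2
        have hsplit : ⟪(v i : H), x⟫_ℂ = ⟪(v i : H), proj (N i) x⟫_ℂ := by
          have h3 := inner_sub_right (𝕜 := ℂ) (v i : H) x (proj (N i) x)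
          rw [hperp] at h3
          exact sub_eq_zero.mp h3.symm
        rw [hsplit]
        exact le_trans (RCLike.re_le_norm _) (norm_inner_le_norm _ _)
      calc ‖x‖ ^ 2 = RCLike.re ⟪x, x⟫_ℂ := by
            rw [inner_self_eq_norm_sq]
        _ = RCLike.re ⟪∑ i, ((v i : H)), x⟫_ℂ := by rw [← hsum]
        _ = ∑ i, RCLike.re ⟪(v i : H), x⟫_ℂ := by rw [sum_inner, map_sum]
        _ ≤ ∑ i, ‖(v i : H)‖ * ‖proj (N i) x‖ := Finset.sum_le_sum fun i _ => step i
        _ ≤ ∑ i, (C * ‖x‖) * ‖proj (N i) x‖ := Finset.sum_le_sum fun i _ =>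
              mul_le_mul_of_nonneg_right (hvnorm i) (norm_nonneg _)
        _ = C * ‖x‖ * A := by rw [hAdef, Finset.mul_sum]
    have h2 : A ^ 2 ≤ (s : ℝ) * (‖T x‖ * ‖x‖) := by
      have h2a : A ^ 2 ≤ (s : ℝ) * ∑ i, ‖proj (N i) x‖ ^ 2 := by
        have := sq_sum_le_card_mul_sum_sq (s := (Finset.univ : Finset (Fin s)))
          (f := fun i => ‖proj (N i) x‖)
        simpa [hAdef] using this
      have h2b : ∑ i, ‖proj (N i) x‖ ^ 2 ≤ ‖T x‖ * ‖x‖ := by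
        rw [← T_inner_re N hN x]
        exact le_trans (RCLike.re_le_norm _) (norm_inner_le_norm _ _)
      calc A ^ 2 ≤ (s : ℝ) * ∑ i, ‖proj (N i) x‖ ^ 2 := h2a
        _ ≤ (s : ℝ) * (‖T x‖ * ‖x‖) := mul_le_mul_of_nonneg_left h2b (Nat.cast_nonneg s)
    have hx0' : 0 < ‖x‖ := norm_pos_iff.mpr hx0
    rw [hcdef]
    exact aux1 hx0' hC hA0 (Nat.cast_nonneg s) (norm_nonneg (T x)) h1 h2
  -- spectral gap
  refine ⟨(2 * c)⁻¹, by positivity, ?_⟩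
  intro z hz hz0
  by_contra hlt
  push_neg at hlt
  have hsa : IsSelfAdjoint T := T_sa N hN
  have hpos : T.IsPositive := T_pos N hN
  obtain ⟨r, hrσ, hrz⟩ : ∃ r : ℝ, r ∈ spectrum ℝ T ∧ (r : ℂ) = z := by
    rw [← hsa.spectrumRestricts.algebraMap_image] at hz
    obtain ⟨r, h1, h2⟩ := hz
    exact ⟨r, h1, h2⟩
  have hr0 : 0 ≤ r :=
    spectrum_nonneg_of_nonneg ((ContinuousLinearMap.nonneg_iff_isPositive T).mpr hpos) hrσ
  have hrne : r ≠ 0 := by rintro rfl; exact hz0 (by exact_mod_cast hrz.symm)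
  have hrpos : 0 < r := hr0.lt_of_ne (Ne.symm hrne)
  have hznorm : ‖z‖ = r := by
    rw [← hrz, Complex.norm_real, Real.norm_eq_abs, _root_.abs_of_nonneg hr0]
  have hrlt : r < (2 * c)⁻¹ := by rw [← hznorm]; exact hlt
  set m := min ((2 * c)⁻¹) r with hmdef
  have hm : 0 < m := lt_min (by positivity) hrpos
  set D := algebraMap ℂ (H →L[ℂ] H) z - T with hDdef
  have hDapp : ∀ x, D x = z • x - T x := fun x => by
    simp [hDdef, Algebra.algebraMap_eq_smul_one]
  have hDsa : IsSelfAdjoint D := by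
    have hzsa : IsSelfAdjoint z := by
      rw [← hrz]; exact Complex.conj_ofReal r
    exact (hzsa.algebraMap _).sub hsa
  have hbdD : ∀ x : H, m * ‖x‖ ≤ ‖D x‖ := by
    intro x
    set u := (orthogonalProjection M x : H) with hudef
    have huM : u ∈ M := (orthogonalProjection M x).2
    set w := x - u with hwdef
    have hwM : w ∈ Mᗮ := sub_starProjection_mem_orthogonal x
    have hTw : T w = 0 := (T_ker N hN w).mpr (by rwa [hMdef] at hwM)
    have hTuM : T u ∈ M := T_range_le N hN ⟨u, rfl⟩
    have hxuw : x = u + w := by rw [hwdef]; abel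
    have hdecomp : D x = (z • u - T u) + z • w := by
      rw [hDapp, hxuw, smul_add, map_add, hTw, add_zero]
      abel
    have hmem1 : z • u - T u ∈ M := M.sub_mem (M.smul_mem z huM) hTuM
    have hmem2 : z • w ∈ Mᗮ := Mᗮ.smul_mem z hwM
    have horth1 : ⟪z • u - T u, z • w⟫_ℂ = 0 := hmem2 _ hmem1
    have horth2 : ⟪u, w⟫_ℂ = 0 := hwM u huM
    have hpyth1 : ‖D x‖ ^ 2 = ‖z • u - T u‖ ^ 2 + ‖z • w‖ ^ 2 := by
      rw [hdecomp, @norm_add_sq ℂ _ _ _ _, horth1]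
      simp
    have hpyth2 : ‖x‖ ^ 2 = ‖u‖ ^ 2 + ‖w‖ ^ 2 := by
      rw [hxuw, @norm_add_sq ℂ _ _ _ _, horth2]
      simp
    have hsmul : ∀ y : H, ‖z • y‖ = r * ‖y‖ := fun y => by
      rw [norm_smul, hznorm]
    have h1b : c⁻¹ * ‖u‖ ≤ ‖T u‖ := by
      have := hbd u huM
      rw [inv_mul_le_iff₀ hc]
      linarith [this]
    have h1 : ‖T u‖ - r * ‖u‖ ≤ ‖z • u - T u‖ := by
      have h4 := norm_sub_norm_le (T u) (z • u)
      rw [hsmul u] at h4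
      rw [norm_sub_rev]
      linarith
    have hm_le : m ≤ c⁻¹ - r := by
      have h5 : (2 * c)⁻¹ = 2⁻¹ * c⁻¹ := by rw [mul_inv]
      have h6 : m ≤ (2 * c)⁻¹ := min_le_left _ _
      have h7 : (0:ℝ) < c⁻¹ := by positivity
      rw [h5] at h6 hrlt
      linarith
    have hcomp1 : m * ‖u‖ ≤ ‖z • u - T u‖ := by
      nlinarith [norm_nonneg u]
    have hcomp2 : m * ‖w‖ ≤ ‖z • w‖ := by
      rw [hsmul w]
      exact mul_le_mul_of_nonneg_right (min_le_right _ _) (norm_nonneg w)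
    exact aux2 hm.le (norm_nonneg u) (norm_nonneg w) (norm_nonneg _) (norm_nonneg _)
      hcomp1 hcomp2 hpyth1 hpyth2 (norm_nonneg _) (norm_nonneg _)
  have hunit : IsUnit ((algebraMap ℂ (H →L[ℂ] H)) z - T) := by
    rw [ContinuousLinearMap.isUnit_iff_bijective]
    refine ⟨fun a b hab => ?_, surj_of_bddBelow hDsa hm hbdD⟩
    have h8 := hbdD (a - b)
    rw [map_sub, hab, sub_self, norm_zero] at h8
    have h9 : m * ‖a - b‖ ≤ m * 0 := by simpa using h8
    have h10 : ‖a - b‖ ≤ 0 := le_of_mul_le_mul_left h9 hm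
    have : ‖a - b‖ = 0 := le_antisymm h10 (norm_nonneg _)
    rw [norm_eq_zero, sub_eq_zero] at this
    exact this
  exact (spectrum.mem_iff.mp hz) hunit

end helpers

theorem stmt15 {H : Type*} [NormedAddCommGroup H] [InnerProductSpace ℂ H] [CompleteSpace H]
    {s : ℕ} (N : Fin s → Submodule ℂ H) (hN : ∀ i, IsClosed ((N i : Set H))) :
    (IsClosed ((⨆ i, N i : Submodule ℂ H) : Set H) ↔
        ¬ AccPt (0 : ℂ) (Filter.principal (spectrum ℂ (∑ i, proj (N i))))) ∧
      (IsClosed ((⨆ i, N i : Submodule ℂ H) : Set H) →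
        LinearMap.range ((∑ i, proj (N i) : H →L[ℂ] H) : H →ₗ[ℂ] H) = ⨆ i, N i) := by
  refine ⟨⟨fun h => (gap_iff_not_accPt _).mp (L2 N hN h),
    fun h => (L1 N hN ((gap_iff_not_accPt _).mpr h)).2⟩,
    fun h => (L1 N hN (L2 N hN h)).1⟩
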